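/- Let (Q0, Q1, Q2, Q3, A1, A2) be a solution of system (S) on [0, ∞) with initial data Q0(0) > 0, Q1(0) = Q2(0) = Q3(0) = 0, A1(0) ∈ (-τ_{A1}, τ_{A1}), A2(0) ∈ (0, τ_{A2}), and assume τ_{A1} < τ_{A1}^C. Then A2 converges exponentially fast to τ_{A2}: there exist t* > 0, a constant C > 0 and a rate r > 0 such that for all t > t*, |A2(t) - τ_{A2}| ≤ C |A2(0) - τ_{A2}| e^{-r t}. -/

import Mathlib

open Set Filter Real

/-- One-sided real Grönwall inequality from a right derivative. -/
lemma gron_le {f f' : ℝ → ℝ} {δ K ε a b : ℝ} (hf : ContinuousOn f (Icc a b))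
    (hf' : ∀ x ∈ Ico a b, HasDerivWithinAt f (f' x) (Ici x) x)
    (ha : f a ≤ δ) (bound : ∀ x ∈ Ico a b, f' x ≤ K * f x + ε) :
    ∀ x ∈ Icc a b, f x ≤ gronwallBound δ K ε (x - a) :=
  le_gronwallBound_of_liminf_deriv_right_le hf
    (fun x hx _r hr => (hf' x hx).liminf_right_slope_le hr) ha bound

lemma hasDerivAt_minsq (a : ℝ) :
    HasDerivAt (fun x : ℝ => min x 0 ^ 2) (2 * min a 0) a := by
  rcases lt_trichotomy a 0 with h | h | h
  · have h2 : HasDerivAt (fun x : ℝ => x ^ 2) (2 * a) a := by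
      simpa using hasDerivAt_pow 2 a
    have he : (fun x : ℝ => min x 0 ^ 2) =ᶠ[nhds a] fun x => x ^ 2 := by
      filter_upwards [Iio_mem_nhds h] with x hx
      rw [min_eq_left (le_of_lt hx)]
    rw [min_eq_left h.le]
    exact h2.congr_of_eventuallyEq he
  · subst h
    rw [hasDerivAt_iff_tendsto_slope]
    have hb : ∀ z : ℝ, z ≠ 0 → ‖slope (fun x : ℝ => min x 0 ^ 2) 0 z‖ ≤ |z| := by
      intro z hz
      rw [slope_def_field]
      have h1 : min z 0 ^ 2 ≤ z ^ 2 := by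
        rcases le_total z 0 with h | h
        · rw [min_eq_left h]
        · rw [min_eq_right h]; simpa using sq_nonneg z
      have h2 : |min z 0 ^ 2 - min (0:ℝ) 0 ^ 2| ≤ |z| * |z| := by
        have he : |min z 0 ^ 2 - min (0:ℝ) 0 ^ 2| = min z 0 ^ 2 := by
          rw [min_self]; rw [show ((0:ℝ) ^ 2) = 0 by ring, sub_zero]
          exact abs_of_nonneg (sq_nonneg _)
        rw [he]
        calc min z 0 ^ 2 ≤ z ^ 2 := h1
          _ = |z| * |z| := by rw [← sq_abs]; ring
      calc ‖(min z 0 ^ 2 - min (0:ℝ) 0 ^ 2) / (z - 0)‖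
          = |min z 0 ^ 2 - min (0:ℝ) 0 ^ 2| / |z| := by
            rw [Real.norm_eq_abs, abs_div, sub_zero]
        _ ≤ |z| * |z| / |z| := by gcongr
        _ = |z| := by field_simp
    have habs : Tendsto (fun z : ℝ => |z|) (nhdsWithin 0 {(0:ℝ)}ᶜ) (nhds 0) := by
      have h := (continuous_abs.tendsto (0:ℝ)).mono_left
        (nhdsWithin_le_nhds : nhdsWithin (0:ℝ) {(0:ℝ)}ᶜ ≤ nhds 0)
      simpa using h
    have : Tendsto (slope (fun x : ℝ => min x 0 ^ 2) 0) (nhdsWithin 0 {(0:ℝ)}ᶜ)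
        (nhds 0) := by
      apply squeeze_zero_norm' _ habs
      filter_upwards [self_mem_nhdsWithin] with z hz
      exact hb z hz
    simpa using this
  · have he : (fun x : ℝ => min x 0 ^ 2) =ᶠ[nhds a] fun _ => (0:ℝ) := by
      filter_upwards [Ioi_mem_nhds h] with x hx
      rw [min_eq_right (le_of_lt hx)]; ring
    have : HasDerivAt (fun x : ℝ => min x 0 ^ 2) 0 a :=
      (hasDerivAt_const a (0:ℝ)).congr_of_eventuallyEq he
    simpa [min_eq_right h.le] using this

/-- Positivity is preserved along a (time-dependent) linear scalar ODE. -/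
lemma ode_pos {B h : ℝ → ℝ} (hB : ∀ t ∈ Ici (0:ℝ), HasDerivAt B (h t * B t) t)
    (hh : ContinuousOn h (Ici 0)) (h0 : 0 < B 0) : ∀ t ∈ Ici (0:ℝ), 0 < B t := by
  have hBc : ContinuousOn B (Ici 0) := fun t ht =>
    (hB t ht).continuousAt.continuousWithinAt
  have hne : ∀ T ∈ Ici (0:ℝ), B T ≠ 0 := by
    intro T hT hBT
    have hsub : Icc (0:ℝ) T ⊆ Ici 0 := Icc_subset_Ici_self
    obtain ⟨H0, hH0⟩ := isCompact_Icc.exists_bound_of_continuousOn (hh.mono hsub)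
    set H : ℝ := max H0 0 with hHdef
    have hmem : ∀ s ∈ Icc (0:ℝ) T, T - s ∈ Icc (0:ℝ) T := by
      intro s hs; exact ⟨by linarith [hs.2], by linarith [hs.1]⟩
    set D : ℝ → ℝ := fun s => B (T - s) with hDdef
    have hDc : ContinuousOn D (Icc 0 T) := by
      apply hBc.comp (by fun_prop : Continuous fun s : ℝ => T - s).continuousOn
      intro s hs; exact hsub (hmem s hs)
    have hD' : ∀ s ∈ Ico (0:ℝ) T, HasDerivWithinAt D
        (-(h (T - s) * B (T - s))) (Ici s) s := by
      intro s hs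
      have hms : T - s ∈ Ici (0:ℝ) := by
        have := hs.2; exact mem_Ici.2 (by linarith)
      have hcomp := (hB (T - s) hms).comp s
        (((hasDerivAt_id s).const_sub T))
      have : HasDerivAt D (h (T - s) * B (T - s) * (-1)) s := hcomp
      simpa using this.hasDerivWithinAt
    have hbd : ∀ s ∈ Ico (0:ℝ) T, ‖-(h (T - s) * B (T - s))‖ ≤ H * ‖D s‖ + 0 := by
      intro s hs
      have hms : T - s ∈ Icc (0:ℝ) T := hmem s ⟨hs.1, hs.2.le⟩
      rw [norm_neg, norm_mul, add_zero]
      have h1 : ‖h (T - s)‖ ≤ H := le_trans (hH0 _ hms) (le_max_left _ _)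
      have h2 : (0:ℝ) ≤ ‖B (T - s)‖ := norm_nonneg _
      calc ‖h (T - s)‖ * ‖B (T - s)‖ ≤ H * ‖B (T - s)‖ := by
            apply mul_le_mul_of_nonneg_right h1 h2
        _ = H * ‖D s‖ := rfl
    have hD0 : ‖D 0‖ ≤ 0 := by simp [hDdef, hBT]
    have := norm_le_gronwallBound_of_norm_deriv_right_le hDc hD' hD0 hbd T
      ⟨hT, le_refl T⟩
    rw [gronwallBound_ε0_δ0] at this
    have : B 0 = 0 := by
      have h' : ‖D T‖ ≤ 0 := this
      have : ‖B 0‖ = 0 := le_antisymm (by simpa [hDdef] using h') (norm_nonneg _)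
      simpa using this
    linarith
  intro t ht
  rcases lt_or_ge 0 (B t) with h | h
  · exact h
  · exfalso
    have hBt : B t < 0 := lt_of_le_of_ne h (hne t ht)
    have := intermediate_value_Icc' (mem_Ici.1 ht) (hBc.mono Icc_subset_Ici_self)
    have h0mem : (0:ℝ) ∈ Icc (B t) (B 0) := ⟨hBt.le, h0.le⟩
    obtain ⟨s, hs, hs0⟩ := this h0mem
    exact hne s (Icc_subset_Ici_self hs) hs0
set_option maxHeartbeats 2000000 in
theorem stmt8
    (γ2 γ3 τC τA1 τA1C τA2 τA2C α1 α2 α3 αb2 αb3 : ℝ)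
    (hγ2 : 0 < γ2) (hγ3 : 0 < γ3) (hτC : 0 < τC) (hτA1 : 0 < τA1)
    (hτA1C : 0 < τA1C) (hτA2 : 0 < τA2) (hτA2C : 0 < τA2C)
    (hα1 : 0 < α1) (hα2 : 0 < α2) (hα3 : 0 < α3) (hαb2 : 0 < αb2) (hαb3 : 0 < αb3)
    (f0 : ℝ → ℝ → ℝ) (f1 : ℝ → ℝ) (f2 : ℝ → ℝ → ℝ)
    (K0 K1 K2 : NNReal)
    (hf0lip : LipschitzWith K0 (fun p : ℝ × ℝ => f0 p.1 p.2))
    (hf1lip : LipschitzWith K1 f1)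
    (hf2lip : LipschitzWith K2 (fun p : ℝ × ℝ => f2 p.1 p.2))
    (m0 M0 m1 M1 m2 M2 : ℝ) (hm0 : 0 < m0) (hm1 : 0 < m1) (hm2 : 0 < m2)
    (hf0bd : ∀ x y, m0 ≤ f0 x y ∧ f0 x y ≤ M0)
    (hf1bd : ∀ x, m1 ≤ f1 x ∧ f1 x ≤ M1)
    (hf2bd : ∀ x y, m2 ≤ f2 x y ∧ f2 x y ≤ M2)
    (Q0 Q1 Q2 Q3 A1 A2 : ℝ → ℝ)
    (hQ0' : ∀ t ∈ Set.Ici (0:ℝ), HasDerivAt Q0 (-(f0 (Q2 t) (Q3 t)) * Q0 t) t)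
    (hQ1' : ∀ t ∈ Set.Ici (0:ℝ), HasDerivAt Q1 (f0 (Q2 t) (Q3 t) * Q0 t - f1 (A1 t) * Q1 t) t)
    (hQ2' : ∀ t ∈ Set.Ici (0:ℝ), HasDerivAt Q2
      (γ2 * Q2 t * (1 - (Q2 t + Q3 t) / τC + A1 t / τA1C + A2 t / τA2C)
        + f1 (A1 t) * Q1 t - f2 (A1 t) (A2 t) * Q2 t) t)
    (hQ3' : ∀ t ∈ Set.Ici (0:ℝ), HasDerivAt Q3
      (γ3 * Q3 t * (1 - (Q2 t + Q3 t) / τC + A1 t / τA1C + A2 t / τA2C)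
        + f2 (A1 t) (A2 t) * Q2 t) t)
    (hA1' : ∀ t ∈ Set.Ici (0:ℝ), HasDerivAt A1
      ((α1 * Q1 t + α2 * Q2 t - α3 * Q3 t) * (1 + A1 t / τA1) * (1 - A1 t / τA1)) t)
    (hA2' : ∀ t ∈ Set.Ici (0:ℝ), HasDerivAt A2
      ((αb2 * Q2 t + αb3 * Q3 t) * A2 t * (1 - A2 t / τA2)) t)
    (hQ0i : 0 < Q0 0) (hQ1i : Q1 0 = 0) (hQ2i : Q2 0 = 0) (hQ3i : Q3 0 = 0)
    (hA1i : A1 0 ∈ Set.Ioo (-τA1) τA1) (hA2i : A2 0 ∈ Set.Ioo 0 τA2)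
    (hττ : τA1 < τA1C) :
    ∃ tstar > (0:ℝ), ∃ C > (0:ℝ), ∃ r > (0:ℝ),
      ∀ t > tstar, |A2 t - τA2| ≤ C * |A2 0 - τA2| * Real.exp (-r * t) := by
  obtain ⟨hA1l, hA1r⟩ := hA1i
  obtain ⟨hA2l, hA2r⟩ := hA2i
  -- continuity of solutions
  have hQ0c : ContinuousOn Q0 (Ici 0) := fun t ht => (hQ0' t ht).continuousAt.continuousWithinAt
  have hQ1c : ContinuousOn Q1 (Ici 0) := fun t ht => (hQ1' t ht).continuousAt.continuousWithinAt
  have hQ2c : ContinuousOn Q2 (Ici 0) := fun t ht => (hQ2' t ht).continuousAt.continuousWithinAt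
  have hQ3c : ContinuousOn Q3 (Ici 0) := fun t ht => (hQ3' t ht).continuousAt.continuousWithinAt
  have hA1c : ContinuousOn A1 (Ici 0) := fun t ht => (hA1' t ht).continuousAt.continuousWithinAt
  have hA2c : ContinuousOn A2 (Ici 0) := fun t ht => (hA2' t ht).continuousAt.continuousWithinAt
  have hf0c : Continuous fun p : ℝ × ℝ => f0 p.1 p.2 := hf0lip.continuous
  have hf1c : Continuous f1 := hf1lip.continuous
  have hf2c : Continuous fun p : ℝ × ℝ => f2 p.1 p.2 := hf2lip.continuous
  have hf0Qc : ContinuousOn (fun t => f0 (Q2 t) (Q3 t)) (Ici 0) :=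
    (hf0c.comp_continuousOn (hQ2c.prodMk hQ3c) :
      ContinuousOn ((fun p : ℝ × ℝ => f0 p.1 p.2) ∘ fun t => (Q2 t, Q3 t)) (Ici 0))
  have hM1pos : 0 < M1 := hm1.trans_le ((hf1bd 0).1.trans (hf1bd 0).2)
  have hM2pos : 0 < M2 := hm2.trans_le ((hf2bd 0 0).1.trans (hf2bd 0 0).2)
  -- Step A : positivity of Q0
  have hQ0pos : ∀ t ∈ Ici (0:ℝ), 0 < Q0 t := by
    refine ode_pos (h := fun t => -f0 (Q2 t) (Q3 t)) (fun t ht => ?_) hf0Qc.neg hQ0i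
    simpa using hQ0' t ht
  -- Step B : A1 stays in (-τA1, τA1)
  have hB1pos : ∀ t ∈ Ici (0:ℝ), 0 < τA1 ^ 2 - A1 t ^ 2 := by
    have hb : ∀ t ∈ Ici (0:ℝ), HasDerivAt (fun t => τA1 ^ 2 - A1 t ^ 2)
        ((fun t => -(2 * A1 t * (α1 * Q1 t + α2 * Q2 t - α3 * Q3 t)) / τA1 ^ 2) t
          * ((fun t => τA1 ^ 2 - A1 t ^ 2) t)) t := by
      intro t ht
      have hd := ((hA1' t ht).pow 2).const_sub (τA1 ^ 2)
      refine hd.congr_deriv ?_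
      have hτ : τA1 ≠ 0 := hτA1.ne'
      field_simp
      ring
    have hc : ContinuousOn (fun t => -(2 * A1 t * (α1 * Q1 t + α2 * Q2 t - α3 * Q3 t)) / τA1 ^ 2)
        (Ici 0) := by
      apply ContinuousOn.div_const
      apply ContinuousOn.neg
      exact (continuousOn_const.mul hA1c).mul
        (((continuousOn_const.mul hQ1c).add (continuousOn_const.mul hQ2c)).sub
          (continuousOn_const.mul hQ3c))
    have h0 : 0 < τA1 ^ 2 - A1 0 ^ 2 := by nlinarith
    exact ode_pos hb hc h0
  have hA1bd : ∀ t ∈ Ici (0:ℝ), -τA1 < A1 t ∧ A1 t < τA1 := by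
    intro t ht
    have h := hB1pos t ht
    constructor
    · nlinarith [h, hτA1]
    · nlinarith [h, hτA1]
  -- Step C : A2 stays in (0, τA2)
  have hB2pos : ∀ t ∈ Ici (0:ℝ), 0 < A2 t * (τA2 - A2 t) := by
    have hb : ∀ t ∈ Ici (0:ℝ), HasDerivAt (fun t => A2 t * (τA2 - A2 t))
        ((fun t => (αb2 * Q2 t + αb3 * Q3 t) * (τA2 - 2 * A2 t) / τA2) t
          * ((fun t => A2 t * (τA2 - A2 t)) t)) t := by
      intro t ht
      have hd := (hA2' t ht).mul ((hA2' t ht).const_sub τA2)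
      refine hd.congr_deriv ?_
      have hτ : τA2 ≠ 0 := hτA2.ne'
      field_simp
      ring
    have hc : ContinuousOn (fun t => (αb2 * Q2 t + αb3 * Q3 t) * (τA2 - 2 * A2 t) / τA2)
        (Ici 0) := by
      apply ContinuousOn.div_const
      exact ((continuousOn_const.mul hQ2c).add (continuousOn_const.mul hQ3c)).mul
        (continuousOn_const.sub (continuousOn_const.mul hA2c))
    have h0 : 0 < A2 0 * (τA2 - A2 0) := by nlinarith
    exact ode_pos hb hc h0
  have hA2bd : ∀ t ∈ Ici (0:ℝ), 0 < A2 t ∧ A2 t < τA2 := by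
    intro t ht
    have h := hB2pos t ht
    have hl : 0 < A2 t := by nlinarith [sq_nonneg (A2 t), hτA2]
    exact ⟨hl, by nlinarith [hl]⟩
  -- Step D : nonnegativity of Q1, Q2, Q3
  have hQnn : ∀ t ∈ Ici (0:ℝ), 0 ≤ Q1 t ∧ 0 ≤ Q2 t ∧ 0 ≤ Q3 t := by
    intro b hb
    have hb0 : (0:ℝ) ≤ b := hb
    have hbsub : Icc (0:ℝ) b ⊆ Ici 0 := Icc_subset_Ici_self
    have hBfc : ContinuousOn
        (fun t => 1 - (Q2 t + Q3 t) / τC + A1 t / τA1C + A2 t / τA2C) (Ici 0) := by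
      exact ((continuousOn_const.sub ((hQ2c.add hQ3c).div_const τC)).add
        (hA1c.div_const τA1C)).add (hA2c.div_const τA2C)
    obtain ⟨H0, hH0⟩ := isCompact_Icc.exists_bound_of_continuousOn (hBfc.mono hbsub)
    set Hb : ℝ := max H0 0 with hHbdef
    have hHb0 : 0 ≤ Hb := le_max_right _ _
    have hHb : ∀ t ∈ Icc (0:ℝ) b,
        |1 - (Q2 t + Q3 t) / τC + A1 t / τA1C + A2 t / τA2C| ≤ Hb :=
      fun t ht => le_trans (hH0 t ht) (le_max_left _ _)
    set K : ℝ := 2 * γ2 * Hb + 2 * γ3 * Hb + M1 + M2 with hKdef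
    set V : ℝ → ℝ := fun t => min (Q1 t) 0 ^ 2 + min (Q2 t) 0 ^ 2 + min (Q3 t) 0 ^ 2
      with hVdef
    set Vd : ℝ → ℝ := fun t =>
      2 * min (Q1 t) 0 * (f0 (Q2 t) (Q3 t) * Q0 t - f1 (A1 t) * Q1 t)
      + 2 * min (Q2 t) 0 * (γ2 * Q2 t * (1 - (Q2 t + Q3 t) / τC + A1 t / τA1C + A2 t / τA2C)
          + f1 (A1 t) * Q1 t - f2 (A1 t) (A2 t) * Q2 t)
      + 2 * min (Q3 t) 0 * (γ3 * Q3 t * (1 - (Q2 t + Q3 t) / τC + A1 t / τA1C + A2 t / τA2C)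
          + f2 (A1 t) (A2 t) * Q2 t) with hVddef
    have hV' : ∀ t ∈ Ico (0:ℝ) b, HasDerivWithinAt V (Vd t) (Ici t) t := by
      intro t ht
      have ht' : t ∈ Ici (0:ℝ) := ht.1
      have h1 := (hasDerivAt_minsq (Q1 t)).comp t (hQ1' t ht')
      have h2 := (hasDerivAt_minsq (Q2 t)).comp t (hQ2' t ht')
      have h3 := (hasDerivAt_minsq (Q3 t)).comp t (hQ3' t ht')
      exact ((h1.add h2).add h3).hasDerivWithinAt
    have hVc : ContinuousOn V (Icc 0 b) := by
      apply ContinuousOn.add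
      apply ContinuousOn.add
      · exact ((continuous_id.min continuous_const).pow 2).comp_continuousOn (hQ1c.mono hbsub)
      · exact ((continuous_id.min continuous_const).pow 2).comp_continuousOn (hQ2c.mono hbsub)
      · exact ((continuous_id.min continuous_const).pow 2).comp_continuousOn (hQ3c.mono hbsub)
    have hV0 : V 0 ≤ 0 := by simp [hVdef, hQ1i, hQ2i, hQ3i]
    have hbound : ∀ t ∈ Ico (0:ℝ) b, Vd t ≤ K * V t + 0 := by
      intro t ht
      have ht' : t ∈ Ici (0:ℝ) := ht.1
      have htc : t ∈ Icc (0:ℝ) b := ⟨ht.1, ht.2.le⟩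
      set φ1 := min (Q1 t) 0 with hφ1def
      set φ2 := min (Q2 t) 0 with hφ2def
      set φ3 := min (Q3 t) 0 with hφ3def
      set Bt := 1 - (Q2 t + Q3 t) / τC + A1 t / τA1C + A2 t / τA2C with hBtdef
      have hφ1 : φ1 ≤ 0 := min_le_right _ _
      have hφ2 : φ2 ≤ 0 := min_le_right _ _
      have hφ3 : φ3 ≤ 0 := min_le_right _ _
      have e1 : φ1 * Q1 t = φ1 ^ 2 := by
        rcases le_total (Q1 t) 0 with h | h
        · rw [hφ1def, min_eq_left h]; ring
        · rw [hφ1def, min_eq_right h]; ring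
      have e2 : φ2 * Q2 t = φ2 ^ 2 := by
        rcases le_total (Q2 t) 0 with h | h
        · rw [hφ2def, min_eq_left h]; ring
        · rw [hφ2def, min_eq_right h]; ring
      have e3 : φ3 * Q3 t = φ3 ^ 2 := by
        rcases le_total (Q3 t) 0 with h | h
        · rw [hφ3def, min_eq_left h]; ring
        · rw [hφ3def, min_eq_right h]; ring
      have hBtle : Bt ≤ Hb := (le_abs_self _).trans (hHb t htc)
      have hf1pos : 0 < f1 (A1 t) := hm1.trans_le (hf1bd _).1
      have hf2pos : 0 < f2 (A1 t) (A2 t) := hm2.trans_le (hf2bd _ _).1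
      have hf1le : f1 (A1 t) ≤ M1 := (hf1bd _).2
      have hf2le : f2 (A1 t) (A2 t) ≤ M2 := (hf2bd _ _).2
      -- Term A
      have p1 : 0 ≤ f0 (Q2 t) (Q3 t) * Q0 t :=
        mul_nonneg (hm0.le.trans (hf0bd _ _).1) (hQ0pos t ht').le
      have q1 : φ1 * (f0 (Q2 t) (Q3 t) * Q0 t) ≤ 0 := mul_nonpos_iff.2 (Or.inr ⟨hφ1, p1⟩)
      have q2 : 0 ≤ f1 (A1 t) * φ1 ^ 2 := mul_nonneg hf1pos.le (sq_nonneg _)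
      have TA : 2 * φ1 * (f0 (Q2 t) (Q3 t) * Q0 t - f1 (A1 t) * Q1 t) ≤ 0 := by
        calc 2 * φ1 * (f0 (Q2 t) (Q3 t) * Q0 t - f1 (A1 t) * Q1 t)
            = 2 * (φ1 * (f0 (Q2 t) (Q3 t) * Q0 t)) - 2 * (f1 (A1 t) * (φ1 * Q1 t)) := by ring
          _ = 2 * (φ1 * (f0 (Q2 t) (Q3 t) * Q0 t)) - 2 * (f1 (A1 t) * φ1 ^ 2) := by rw [e1]
          _ ≤ 0 := by linarith
      -- Term B
      have c1 : 2 * γ2 * Bt * φ2 ^ 2 ≤ 2 * γ2 * Hb * φ2 ^ 2 := by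
        linarith [mul_nonneg (mul_nonneg hγ2.le (sub_nonneg.2 hBtle)) (sq_nonneg φ2)]
      have d1 : φ2 * Q1 t ≤ φ2 * φ1 :=
        mul_le_mul_of_nonpos_left (min_le_left _ _) hφ2
      have d2 : 0 ≤ φ2 * φ1 := mul_nonneg_iff.2 (Or.inr ⟨hφ2, hφ1⟩)
      have c2 : 2 * f1 (A1 t) * (φ2 * Q1 t) ≤ M1 * (φ1 ^ 2 + φ2 ^ 2) := by
        have u1 : 0 ≤ f1 (A1 t) * (φ2 * φ1 - φ2 * Q1 t) :=
          mul_nonneg hf1pos.le (by linarith)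
        have u2 : 0 ≤ (M1 - f1 (A1 t)) * (φ2 * φ1) :=
          mul_nonneg (by linarith) d2
        have u3 : 0 ≤ M1 * (φ1 - φ2) ^ 2 := mul_nonneg hM1pos.le (sq_nonneg _)
        linarith [u1, u2, u3]
      have c3 : 0 ≤ 2 * f2 (A1 t) (A2 t) * φ2 ^ 2 := by positivity
      have TB : 2 * φ2 * (γ2 * Q2 t * Bt + f1 (A1 t) * Q1 t - f2 (A1 t) (A2 t) * Q2 t)
          ≤ 2 * γ2 * Hb * φ2 ^ 2 + M1 * (φ1 ^ 2 + φ2 ^ 2) := by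
        calc 2 * φ2 * (γ2 * Q2 t * Bt + f1 (A1 t) * Q1 t - f2 (A1 t) (A2 t) * Q2 t)
            = 2 * γ2 * Bt * (φ2 * Q2 t) + 2 * f1 (A1 t) * (φ2 * Q1 t)
              - 2 * f2 (A1 t) (A2 t) * (φ2 * Q2 t) := by ring
          _ = 2 * γ2 * Bt * φ2 ^ 2 + 2 * f1 (A1 t) * (φ2 * Q1 t)
              - 2 * f2 (A1 t) (A2 t) * φ2 ^ 2 := by rw [e2]
          _ ≤ 2 * γ2 * Hb * φ2 ^ 2 + M1 * (φ1 ^ 2 + φ2 ^ 2) := by linarith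
      -- Term C
      have c4 : 2 * γ3 * Bt * φ3 ^ 2 ≤ 2 * γ3 * Hb * φ3 ^ 2 := by
        linarith [mul_nonneg (mul_nonneg hγ3.le (sub_nonneg.2 hBtle)) (sq_nonneg φ3)]
      have d3 : φ3 * Q2 t ≤ φ3 * φ2 :=
        mul_le_mul_of_nonpos_left (min_le_left _ _) hφ3
      have d4 : 0 ≤ φ3 * φ2 := mul_nonneg_iff.2 (Or.inr ⟨hφ3, hφ2⟩)
      have c5 : 2 * f2 (A1 t) (A2 t) * (φ3 * Q2 t) ≤ M2 * (φ2 ^ 2 + φ3 ^ 2) := by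
        have u1 : 0 ≤ f2 (A1 t) (A2 t) * (φ3 * φ2 - φ3 * Q2 t) :=
          mul_nonneg hf2pos.le (by linarith)
        have u2 : 0 ≤ (M2 - f2 (A1 t) (A2 t)) * (φ3 * φ2) :=
          mul_nonneg (by linarith) d4
        have u3 : 0 ≤ M2 * (φ2 - φ3) ^ 2 := mul_nonneg hM2pos.le (sq_nonneg _)
        linarith [u1, u2, u3]
      have TC : 2 * φ3 * (γ3 * Q3 t * Bt + f2 (A1 t) (A2 t) * Q2 t)
          ≤ 2 * γ3 * Hb * φ3 ^ 2 + M2 * (φ2 ^ 2 + φ3 ^ 2) := by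
        calc 2 * φ3 * (γ3 * Q3 t * Bt + f2 (A1 t) (A2 t) * Q2 t)
            = 2 * γ3 * Bt * (φ3 * Q3 t) + 2 * f2 (A1 t) (A2 t) * (φ3 * Q2 t) := by ring
          _ = 2 * γ3 * Bt * φ3 ^ 2 + 2 * f2 (A1 t) (A2 t) * (φ3 * Q2 t) := by rw [e3]
          _ ≤ 2 * γ3 * Hb * φ3 ^ 2 + M2 * (φ2 ^ 2 + φ3 ^ 2) := by linarith
      have hgoal : Vd t = 2 * φ1 * (f0 (Q2 t) (Q3 t) * Q0 t - f1 (A1 t) * Q1 t)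
          + 2 * φ2 * (γ2 * Q2 t * Bt + f1 (A1 t) * Q1 t - f2 (A1 t) (A2 t) * Q2 t)
          + 2 * φ3 * (γ3 * Q3 t * Bt + f2 (A1 t) (A2 t) * Q2 t) := rfl
      have hVt : V t = φ1 ^ 2 + φ2 ^ 2 + φ3 ^ 2 := rfl
      rw [hgoal, hVt, hKdef]
      linarith [TA, TB, TC,
        mul_nonneg (mul_nonneg (mul_nonneg (by norm_num : (0:ℝ) ≤ 2) hγ2.le) hHb0) (sq_nonneg φ1),
        mul_nonneg (mul_nonneg (mul_nonneg (by norm_num : (0:ℝ) ≤ 2) hγ2.le) hHb0) (sq_nonneg φ3),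
        mul_nonneg (mul_nonneg (mul_nonneg (by norm_num : (0:ℝ) ≤ 2) hγ3.le) hHb0) (sq_nonneg φ1),
        mul_nonneg (mul_nonneg (mul_nonneg (by norm_num : (0:ℝ) ≤ 2) hγ3.le) hHb0) (sq_nonneg φ2),
        mul_nonneg hM1pos.le (sq_nonneg φ3), mul_nonneg hM2pos.le (sq_nonneg φ1)]
    have hgr := gron_le hVc hV' hV0 hbound b ⟨hb0, le_refl b⟩
    rw [gronwallBound_ε0_δ0] at hgr
    have hs1 : (0:ℝ) ≤ min (Q1 b) 0 ^ 2 := sq_nonneg _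
    have hs2 : (0:ℝ) ≤ min (Q2 b) 0 ^ 2 := sq_nonneg _
    have hs3 : (0:ℝ) ≤ min (Q3 b) 0 ^ 2 := sq_nonneg _
    have hVb : V b = min (Q1 b) 0 ^ 2 + min (Q2 b) 0 ^ 2 + min (Q3 b) 0 ^ 2 := rfl
    rw [hVb] at hgr
    have hz1 : min (Q1 b) 0 = 0 := by
      have : min (Q1 b) 0 ^ 2 = 0 := by linarith
      exact pow_eq_zero_iff (by norm_num) |>.1 this
    have hz2 : min (Q2 b) 0 = 0 := by
      have : min (Q2 b) 0 ^ 2 = 0 := by linarith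
      exact pow_eq_zero_iff (by norm_num) |>.1 this
    have hz3 : min (Q3 b) 0 = 0 := by
      have : min (Q3 b) 0 ^ 2 = 0 := by linarith
      exact pow_eq_zero_iff (by norm_num) |>.1 this
    exact ⟨min_eq_right_iff.1 hz1, min_eq_right_iff.1 hz2, min_eq_right_iff.1 hz3⟩
  -- Step E : strict positivity of Q1, Q2, Q3 on (0, ∞)
  have hQ1pos : ∀ t : ℝ, 0 < t → 0 < Q1 t := by
    intro t ht
    rcases ((hQnn t ht.le).1).lt_or_eq with h | h
    · exact h
    · exfalso
      have hmin : IsLocalMin Q1 t := by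
        have : ∀ᶠ s in nhds t, Q1 t ≤ Q1 s := by
          filter_upwards [Ioi_mem_nhds ht] with s hs
          rw [← h]; exact (hQnn s (mem_Ici.2 (mem_Ioi.1 hs).le)).1
        exact this
      have hz := hmin.hasDerivAt_eq_zero (hQ1' t ht.le)
      have hpos : 0 < f0 (Q2 t) (Q3 t) * Q0 t :=
        mul_pos (hm0.trans_le (hf0bd _ _).1) (hQ0pos t ht.le)
      rw [← h] at hz
      linarith [hz, hpos]
  have hQ2pos : ∀ t : ℝ, 0 < t → 0 < Q2 t := by
    intro t ht
    rcases ((hQnn t ht.le).2.1).lt_or_eq with h | h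
    · exact h
    · exfalso
      have hmin : IsLocalMin Q2 t := by
        have : ∀ᶠ s in nhds t, Q2 t ≤ Q2 s := by
          filter_upwards [Ioi_mem_nhds ht] with s hs
          rw [← h]; exact (hQnn s (mem_Ici.2 (mem_Ioi.1 hs).le)).2.1
        exact this
      have hz := hmin.hasDerivAt_eq_zero (hQ2' t ht.le)
      have hpos : 0 < f1 (A1 t) * Q1 t :=
        mul_pos (hm1.trans_le (hf1bd _).1) (hQ1pos t ht)
      rw [← h] at hz
      linarith [hz, hpos]
  have hQ3pos : ∀ t : ℝ, 0 < t → 0 < Q3 t := by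
    intro t ht
    rcases ((hQnn t ht.le).2.2).lt_or_eq with h | h
    · exact h
    · exfalso
      have hmin : IsLocalMin Q3 t := by
        have : ∀ᶠ s in nhds t, Q3 t ≤ Q3 s := by
          filter_upwards [Ioi_mem_nhds ht] with s hs
          rw [← h]; exact (hQnn s (mem_Ici.2 (mem_Ioi.1 hs).le)).2.2
        exact this
      have hz := hmin.hasDerivAt_eq_zero (hQ3' t ht.le)
      have hpos : 0 < f2 (A1 t) (A2 t) * Q2 t :=
        mul_pos (hm2.trans_le (hf2bd _ _).1) (hQ2pos t ht)
      rw [← h] at hz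
      linarith [hz, hpos]
  -- Step F : A2 is monotone
  have hA2mono : MonotoneOn A2 (Ici 0) := by
    apply monotoneOn_of_deriv_nonneg (convex_Ici 0) hA2c
    · intro t ht
      rw [interior_Ici] at ht
      exact ((hA2' t (mem_Ici.2 (le_of_lt (mem_Ioi.1 ht)))).differentiableAt).differentiableWithinAt
    · intro t ht
      rw [interior_Ici] at ht
      have htI : t ∈ Ici (0:ℝ) := mem_Ici.2 (le_of_lt (mem_Ioi.1 ht))
      rw [(hA2' t htI).deriv]
      have h2 := hQnn t htI
      have ha := hA2bd t htI
      have hg : 0 ≤ αb2 * Q2 t + αb3 * Q3 t :=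
        add_nonneg (mul_nonneg hαb2.le h2.2.1) (mul_nonneg hαb3.le h2.2.2)
      have h1A : 0 ≤ 1 - A2 t / τA2 := by
        rw [sub_nonneg, div_le_one hτA2]
        exact ha.2.le
      exact mul_nonneg (mul_nonneg hg ha.1.le) h1A
  -- Step G : lower bound for S = Q2 + Q3 after time 1
  set ε : ℝ := 1 - τA1 / τA1C with hεdef
  have hεpos : 0 < ε := by
    rw [hεdef, sub_pos, div_lt_one hτA1C]
    exact hττ
  have hS' : ∀ t ∈ Ici (0:ℝ), HasDerivAt (fun t => Q2 t + Q3 t)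
      (γ2 * Q2 t * (1 - (Q2 t + Q3 t) / τC + A1 t / τA1C + A2 t / τA2C)
        + γ3 * Q3 t * (1 - (Q2 t + Q3 t) / τC + A1 t / τA1C + A2 t / τA2C)
        + f1 (A1 t) * Q1 t) t := by
    intro t ht
    have h := (hQ2' t ht).add (hQ3' t ht)
    refine h.congr_deriv ?_
    ring
  have hS1pos : 0 < Q2 1 + Q3 1 := by
    have := hQ2pos 1 one_pos
    have := hQ3pos 1 one_pos
    linarith
  set δ : ℝ := min (Q2 1 + Q3 1) (ε * τC / 2) with hδdef
  have hδpos : 0 < δ := lt_min hS1pos (by positivity)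
  have hSlb : ∀ t : ℝ, 1 ≤ t → δ ≤ Q2 t + Q3 t := by
    by_contra hcon
    push_neg at hcon
    obtain ⟨t2, ht2ge, ht2⟩ := hcon
    have ht2gt : 1 < t2 := by
      rcases eq_or_lt_of_le ht2ge with h | h
      · exfalso; rw [← h] at ht2; exact absurd (min_le_left _ _) (not_le.2 ht2)
      · exact h
    set T : Set ℝ := Icc 1 t2 ∩ (fun t => Q2 t + Q3 t) ⁻¹' (Ici δ) with hTdef
    have hScont : ContinuousOn (fun t => Q2 t + Q3 t) (Icc 1 t2) :=
      (hQ2c.add hQ3c).mono (fun x hx => le_trans zero_le_one hx.1)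
    have hTclosed : IsClosed T :=
      hScont.preimage_isClosed_of_isClosed isClosed_Icc isClosed_Ici
    have hTne : T.Nonempty :=
      ⟨1, ⟨le_refl 1, ht2gt.le⟩, by
        simp only [mem_preimage, mem_Ici]; exact min_le_left _ _⟩
    have hTbdd : BddAbove T := ⟨t2, fun x hx => hx.1.2⟩
    set t0 : ℝ := sSup T with ht0def
    have ht0T : t0 ∈ T := hTclosed.csSup_mem hTne hTbdd
    have ht0mem : t0 ∈ Icc (1:ℝ) t2 := ht0T.1
    have hSt0ge : δ ≤ Q2 t0 + Q3 t0 := ht0T.2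
    have ht0lt : t0 < t2 := by
      rcases eq_or_lt_of_le ht0mem.2 with h | h
      · exfalso; rw [h] at hSt0ge; linarith
      · exact h
    have ht0I : t0 ∈ Ici (0:ℝ) := le_trans zero_le_one ht0mem.1
    have hright : ∀ s ∈ Ioc t0 t2, Q2 s + Q3 s < δ := by
      intro s hs
      by_contra hge
      push_neg at hge
      have hsT : s ∈ T := ⟨⟨le_trans ht0mem.1 hs.1.le, hs.2⟩, hge⟩
      exact absurd (le_csSup hTbdd hsT) (not_le.2 hs.1)
    have hSt0le : Q2 t0 + Q3 t0 ≤ δ := by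
      have htt : Tendsto (fun s => Q2 s + Q3 s) (nhdsWithin t0 (Ioi t0))
          (nhds (Q2 t0 + Q3 t0)) :=
        (((hQ2' t0 ht0I).continuousAt.add (hQ3' t0 ht0I).continuousAt)).continuousWithinAt
      refine le_of_tendsto htt ?_
      filter_upwards [Ioc_mem_nhdsGT ht0lt] with s hs
      exact (hright s hs).le
    have hSt0 : Q2 t0 + Q3 t0 ≤ ε * τC / 2 := le_trans hSt0le (min_le_right _ _)
    -- the bracket is at least ε/2 at t0
    have hBt0 : ε / 2 ≤ 1 - (Q2 t0 + Q3 t0) / τC + A1 t0 / τA1C + A2 t0 / τA2C := by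
      have h1 : (Q2 t0 + Q3 t0) / τC ≤ ε / 2 := by
        rw [div_le_iff₀ hτC]
        have h0S : 0 ≤ Q2 t0 + Q3 t0 := by
          have := (hQnn t0 ht0I).2.1
          have := (hQnn t0 ht0I).2.2
          linarith
        nlinarith [hSt0, hτC, hεpos]
      have h2 : -τA1 / τA1C ≤ A1 t0 / τA1C := by
        gcongr
        exact (hA1bd t0 ht0I).1.le
      rw [neg_div] at h2
      have h3 : 0 ≤ A2 t0 / τA2C := div_nonneg (hA2bd t0 ht0I).1.le hτA2C.le
      have hεeq : τA1 / τA1C = 1 - ε := by rw [hεdef]; ring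
      linarith
    have hB0 : 0 ≤ 1 - (Q2 t0 + Q3 t0) / τC + A1 t0 / τA1C + A2 t0 / τA2C :=
      le_trans (half_pos hεpos).le hBt0
    have hq2 : 0 ≤ Q2 t0 := (hQnn t0 ht0I).2.1
    have hq3 : 0 ≤ Q3 t0 := (hQnn t0 ht0I).2.2
    have ht0pos : 0 < t0 := lt_of_lt_of_le one_pos ht0mem.1
    have hd : 0 < γ2 * Q2 t0 * (1 - (Q2 t0 + Q3 t0) / τC + A1 t0 / τA1C + A2 t0 / τA2C)
        + γ3 * Q3 t0 * (1 - (Q2 t0 + Q3 t0) / τC + A1 t0 / τA1C + A2 t0 / τA2C)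
        + f1 (A1 t0) * Q1 t0 := by
      have n1 : 0 ≤ γ2 * Q2 t0 * (1 - (Q2 t0 + Q3 t0) / τC + A1 t0 / τA1C + A2 t0 / τA2C) :=
        mul_nonneg (mul_nonneg hγ2.le hq2) hB0
      have n2 : 0 ≤ γ3 * Q3 t0 * (1 - (Q2 t0 + Q3 t0) / τC + A1 t0 / τA1C + A2 t0 / τA2C) :=
        mul_nonneg (mul_nonneg hγ3.le hq3) hB0
      have n3 : 0 < f1 (A1 t0) * Q1 t0 :=
        mul_pos (hm1.trans_le (hf1bd _).1) (hQ1pos t0 ht0pos)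
      linarith
    have hW := (hS' t0 ht0I).hasDerivWithinAt (s := Ioi t0)
    rw [hasDerivWithinAt_iff_tendsto_slope] at hW
    have hnm : t0 ∉ Ioi t0 := fun h => lt_irrefl t0 h
    rw [diff_singleton_eq_self hnm] at hW
    have hev1 : ∀ᶠ z in nhdsWithin t0 (Ioi t0),
        0 < slope (fun t => Q2 t + Q3 t) t0 z := hW.eventually (eventually_gt_nhds hd)
    have hev2 : ∀ᶠ z in nhdsWithin t0 (Ioi t0), z ∈ Ioc t0 t2 :=
      eventually_of_mem (Ioc_mem_nhdsGT ht0lt) (fun x hx => hx)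
    obtain ⟨z, hz1, hz2⟩ := (hev1.and hev2).exists
    rw [slope_def_field] at hz1
    have hzpos : 0 < z - t0 := sub_pos.2 hz2.1
    have hzgt : 0 < (Q2 z + Q3 z) - (Q2 t0 + Q3 t0) := by
      have hm := mul_pos hz1 hzpos
      rwa [div_mul_cancel₀ _ hzpos.ne'] at hm
    have hlt := hright z hz2
    linarith
  -- Step H : exponential convergence
  set mα : ℝ := min αb2 αb3 with hmαdef
  have hmαpos : 0 < mα := lt_min hαb2 hαb3
  set r : ℝ := mα * δ * A2 0 / τA2 with hrdef
  have hrpos : 0 < r := div_pos (mul_pos (mul_pos hmαpos hδpos) hA2l) hτA2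
  refine ⟨1, one_pos, Real.exp r, Real.exp_pos r, r, hrpos, ?_⟩
  intro t htgt
  have ht0 : (0:ℝ) ≤ t := by linarith
  have huc : ContinuousOn (fun s => τA2 - A2 s) (Icc 1 t) :=
    continuousOn_const.sub (hA2c.mono (fun x hx => le_trans zero_le_one hx.1))
  have hu' : ∀ s ∈ Ico (1:ℝ) t, HasDerivWithinAt (fun s => τA2 - A2 s)
      (-((αb2 * Q2 s + αb3 * Q3 s) * A2 s * (1 - A2 s / τA2))) (Ici s) s := by
    intro s hs
    have hsI : s ∈ Ici (0:ℝ) := le_trans zero_le_one hs.1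
    exact ((hA2' s hsI).const_sub τA2).hasDerivWithinAt
  have hbd : ∀ s ∈ Ico (1:ℝ) t,
      -((αb2 * Q2 s + αb3 * Q3 s) * A2 s * (1 - A2 s / τA2))
        ≤ (-r) * (τA2 - A2 s) + 0 := by
    intro s hs
    have hsI : s ∈ Ici (0:ℝ) := le_trans zero_le_one hs.1
    have hus : 0 ≤ τA2 - A2 s := by linarith [(hA2bd s hsI).2]
    have hg : mα * δ ≤ αb2 * Q2 s + αb3 * Q3 s := by
      have h2 := (hQnn s hsI).2.1
      have h3 := (hQnn s hsI).2.2
      have hδs := hSlb s hs.1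
      have hm2' : mα ≤ αb2 := min_le_left _ _
      have hm3' : mα ≤ αb3 := min_le_right _ _
      have u1 : 0 ≤ (αb2 - mα) * Q2 s := mul_nonneg (by linarith) h2
      have u2 : 0 ≤ (αb3 - mα) * Q3 s := mul_nonneg (by linarith) h3
      have u3 : mα * δ ≤ mα * (Q2 s + Q3 s) :=
        mul_le_mul_of_nonneg_left hδs hmαpos.le
      nlinarith [u1, u2, u3]
    have hG0 : 0 < αb2 * Q2 s + αb3 * Q3 s :=
      lt_of_lt_of_le (mul_pos hmαpos hδpos) hg
    have hA2s : A2 0 ≤ A2 s := hA2mono self_mem_Ici hsI hsI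
    have hAnn : 0 ≤ A2 0 := hA2l.le
    have key : r * (τA2 - A2 s) ≤ (αb2 * Q2 s + αb3 * Q3 s) * A2 s * (1 - A2 s / τA2) := by
      have h1A : 1 - A2 s / τA2 = (τA2 - A2 s) / τA2 := by
        field_simp
      rw [h1A, hrdef]
      have e : mα * δ * A2 0 / τA2 * (τA2 - A2 s)
          = mα * δ * A2 0 * ((τA2 - A2 s) / τA2) := by ring
      rw [e]
      have husd : 0 ≤ (τA2 - A2 s) / τA2 := div_nonneg hus hτA2.le
      have s1 : mα * δ * A2 0 ≤ (αb2 * Q2 s + αb3 * Q3 s) * A2 s := by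
        have u1 : 0 ≤ (αb2 * Q2 s + αb3 * Q3 s - mα * δ) * A2 0 :=
          mul_nonneg (by linarith) hAnn
        have u2 : 0 ≤ (αb2 * Q2 s + αb3 * Q3 s) * (A2 s - A2 0) :=
          mul_nonneg hG0.le (by linarith)
        nlinarith [u1, u2]
      exact mul_le_mul_of_nonneg_right s1 husd
    linarith
  have hgr := gron_le huc hu' (le_refl (τA2 - A2 1)) hbd t ⟨htgt.le, le_refl t⟩
  rw [gronwallBound_ε0] at hgr
  have hu1 : τA2 - A2 1 ≤ τA2 - A2 0 := by
    have := hA2mono self_mem_Ici (by norm_num : (1:ℝ) ∈ Ici (0:ℝ)) zero_le_one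
    linarith
  have habs_t : |A2 t - τA2| = τA2 - A2 t := by
    rw [abs_of_nonpos (by linarith [(hA2bd t ht0).2])]
    ring
  have habs_0 : |A2 0 - τA2| = τA2 - A2 0 := by
    rw [abs_of_nonpos (by linarith)]
    ring
  rw [habs_t, habs_0]
  have hexp : Real.exp (-r * (t - 1)) = Real.exp r * Real.exp (-r * t) := by
    rw [← Real.exp_add]
    congr 1
    ring
  calc τA2 - A2 t ≤ (τA2 - A2 1) * Real.exp (-r * (t - 1)) := hgr
    _ ≤ (τA2 - A2 0) * Real.exp (-r * (t - 1)) :=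
        mul_le_mul_of_nonneg_right hu1 (Real.exp_nonneg _)
    _ = Real.exp r * (τA2 - A2 0) * Real.exp (-r * t) := by rw [hexp]; ring
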